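/- Let S_n = Y_1 + ... + Y_n where Y_i = B_i X_i are independent random variables, each X_i has distribution Q_i on ℕ = {1,2,...}, and each B_i ~ Bernoulli(p_i) with p_i ∈ (0,1) is independent of X_i. Let λ = Σ_{i=1}^n p_i. Then J_{𝐐,1}(S_n) ≤ (1/λ) · Σ_{i=1}^n p_i³/(1 − p_i). -/

import Mathlib

open scoped BigOperators Classical ENNReal

noncomputable section

/-- Point mass at `0`. -/
def delta0 : ℕ → ℝ := fun x => if x = 0 then 1 else 0

/-- Convolution of two distributions on `ℕ`. -/
def dconv (P R : ℕ → ℝ) : ℕ → ℝ := fun x => ∑ j ∈ Finset.range (x + 1), P j * R (x - j)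

/-- `k`-fold convolution power of `Q` (with `Q^{*0} = δ₀`). -/
def dconvPow (Q : ℕ → ℝ) : ℕ → ℕ → ℝ
  | 0 => delta0
  | k + 1 => dconv (dconvPow Q k) Q

/-- Compound distribution `C_Q R`: the law of `X_1 + ... + X_Y` where `Y ~ R` and the
`X_i` are i.i.d. with law `Q`, independent of `Y`. -/
def dcompound (Q R : ℕ → ℝ) : ℕ → ℝ := fun x => ∑' k, R k * dconvPow Q k x

/-- Poisson(λ) pmf. -/
def poissonPmf (l : ℝ) : ℕ → ℝ := fun k => Real.exp (-l) * l ^ k / (Nat.factorial k : ℝ)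

/-- Compound Poisson distribution `CPo(λ, Q)`. -/
def cpo (l : ℝ) (Q : ℕ → ℝ) : ℕ → ℝ := dcompound Q (poissonPmf l)

/-- Bernoulli(p) pmf on `ℕ`. -/
def bern (p : ℝ) : ℕ → ℝ := fun k => if k = 0 then 1 - p else if k = 1 then p else 0

/-- Compound Bernoulli distribution `C_Q Bern(p)`, i.e. the law of `B·X` with
`B ~ Bern(p)` independent of `X ~ Q` (where `Q` is supported on `{1,2,...}`). -/
def cbern (p : ℝ) (Q : ℕ → ℝ) : ℕ → ℝ := fun x => if x = 0 then 1 - p else p * Q x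

/-- Distribution of the sum of `n` independent random variables with laws `P i`. -/
def sumDist : (n : ℕ) → (Fin n → ℕ → ℝ) → ℕ → ℝ
  | 0, _ => delta0
  | n + 1, P => dconv (sumDist n fun i => P i.castSucc) (P (Fin.last n))

/-- `P` is a probability distribution on `ℤ≥0 = {0,1,2,...}`. -/
def IsDist (P : ℕ → ℝ) : Prop := (∀ x, 0 ≤ P x) ∧ (∑' x : ℕ, P x) = 1

/-- `Q` is a probability distribution on `ℕ = {1,2,...}`. -/
def IsDistN (Q : ℕ → ℝ) : Prop := IsDist Q ∧ Q 0 = 0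

/-- Relative entropy `D(P‖R)`. -/
def relEnt (P R : ℕ → ℝ) : ℝ := ∑' x, P x * Real.log (P x / R x)

/-- Total variation distance. -/
def dTV (P R : ℕ → ℝ) : ℝ := (1 / 2) * ∑' x, |P x - R x|

/-- Mean of a distribution on `ℕ`. -/
def pmean (P : ℕ → ℝ) : ℝ := ∑' x : ℕ, (x : ℝ) * P x

/-- Size-biased distribution `R^#`. -/
def sizeBias (R : ℕ → ℝ) : ℕ → ℝ := fun y => ((y : ℝ) + 1) * R (y + 1) / pmean R

/-- The Stein factor `H(λ, Q)`. -/
def steinFactor (l : ℝ) (Q : ℕ → ℝ) : ℝ :=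
  if ∀ j : ℕ, 1 ≤ j → ((j : ℝ) + 1) * Q (j + 1) ≤ (j : ℝ) * Q j then
    if 1 ≤ (l * (Q 1 - 2 * Q 2))⁻¹ then 1
    else Real.sqrt (l * (Q 1 - 2 * Q 2))⁻¹ * (2 - Real.sqrt (l * (Q 1 - 2 * Q 2))⁻¹)
  else Real.exp l * min 1 (l * Q 1)⁻¹

/-- Distribution of the leave-one-out sum `∑_{j ≠ i} Y_j`. -/
def looDist (n : ℕ) (P : Fin n → ℕ → ℝ) (i : Fin n) : ℕ → ℝ :=
  sumDist n (Function.update P i delta0)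

/-- Size-biased score `r₁(s; P, 𝐐)` of a sum, where `Pmod i = P^{(i)}` is the law of the
sum with the `i`-th summand replaced by an independent `Y_i' ~ C_{Q_i}(R_i^#)`. -/
def score1 (n : ℕ) (p : Fin n → ℝ) (P : ℕ → ℝ) (Pmod : Fin n → ℕ → ℝ) (s : ℕ) : ℝ :=
  (∑ i : Fin n, p i * Pmod i s) / ((∑ i : Fin n, p i) * P s) - 1

/-- Size-biased information `J_{𝐐,1}(S) = λ E[r₁(S; P, 𝐐)²]`. -/
def J1 (n : ℕ) (p : Fin n → ℝ) (P : ℕ → ℝ) (Pmod : Fin n → ℕ → ℝ) : ℝ :=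
  (∑ i : Fin n, p i) * ∑' s, P s * (score1 n p P Pmod s) ^ 2

/-- Size-biased score of a single summand `Y ~ P = C_Q R`, where `Pmod = C_Q (R^#)`. -/
def score1s (P Pmod : ℕ → ℝ) (x : ℕ) : ℝ := Pmod x / P x - 1

/-- Size-biased information of a single summand: `J_{Q,1}(Y) = p E[r₁(Y; P, Q)²]`. -/
def J1s (p : ℝ) (P Pmod : ℕ → ℝ) : ℝ := p * ∑' x, P x * (score1s P Pmod x) ^ 2

/-- Katti-Panjer score `r₂(y; P, Q)` with parameter `λ`. -/
def score2 (l : ℝ) (Q P : ℕ → ℝ) (y : ℕ) : ℝ :=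
  l * (∑ j ∈ Finset.range (y + 1), (j : ℝ) * Q j * P (y - j)) / P y - (y : ℝ)

/-- Katti-Panjer information `J_{Q,2}(Y) = E[r₂(Y; P, Q)²]`. -/
def J2 (l : ℝ) (Q P : ℕ → ℝ) : ℝ := ∑' y, P y * (score2 l Q P y) ^ 2

/-- Dissimilarity measure `D(𝐐) = ∑_{j≥1} ∑_i (j pᵢ / q) |Qᵢ(j) − Q(j)|`. -/
def dissim (n : ℕ) (p : Fin n → ℝ) (Qs : Fin n → ℕ → ℝ) (Q : ℕ → ℝ) (q : ℝ) : ℝ :=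
  ∑' j : ℕ, ∑ i : Fin n, (j : ℝ) * p i / q * |Qs i j - Q j|

lemma delta0_nonneg : ∀ x, 0 ≤ delta0 x := by
  intro x; unfold delta0; positivity

lemma delta0_summable : Summable (fun x => |delta0 x|) := by
  apply summable_of_finite_support
  apply Set.Finite.subset (Set.finite_singleton 0)
  intro x hx
  simp only [Function.support, delta0, Set.mem_setOf_eq] at hx
  by_contra h
  simp only [Set.mem_singleton_iff] at h
  simp [h] at hx

lemma delta0_tsum : ∑' x, delta0 x = 1 := by
  rw [tsum_eq_single 0] <;> simp [delta0]

lemma dconv_delta0 (f : ℕ → ℝ) : dconv f delta0 = f := by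
  funext x
  unfold dconv delta0
  rw [Finset.sum_eq_single x]
  · simp
  · intro j hj hne
    have : x - j ≠ 0 := by
      simp only [Finset.mem_range] at hj; omega
    simp [this]
  · intro h; simp at h

lemma dconv_nonneg {f g : ℕ → ℝ} (hf : ∀ x, 0 ≤ f x) (hg : ∀ x, 0 ≤ g x) :
    ∀ x, 0 ≤ dconv f g x := by
  intro x; exact Finset.sum_nonneg fun j _ => mul_nonneg (hf j) (hg _)

lemma abs_dconv_le {f g F G : ℕ → ℝ} (hf : ∀ x, |f x| ≤ F x) (hg : ∀ x, |g x| ≤ G x) :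
    ∀ x, |dconv f g x| ≤ dconv F G x := by
  intro x
  calc |dconv f g x| ≤ ∑ j ∈ Finset.range (x+1), |f j * g (x - j)| := Finset.abs_sum_le_sum_abs _ _
    _ ≤ dconv F G x := by
        apply Finset.sum_le_sum
        intro j _
        rw [abs_mul]
        exact mul_le_mul (hf j) (hg _) (abs_nonneg _) ((abs_nonneg _).trans (hf j))

lemma dconv_summable {f g : ℕ → ℝ} (hf : Summable (fun x => |f x|)) (hg : Summable (fun x => |g x|)) :
    Summable (fun x => |dconv f g x|) := by
  simpa [Real.norm_eq_abs, dconv] using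
    summable_norm_sum_mul_range_of_summable_norm (f := f) (g := g)
      (by simpa [Real.norm_eq_abs] using hf) (by simpa [Real.norm_eq_abs] using hg)

lemma dconv_tsum {f g : ℕ → ℝ} (hf : Summable (fun x => |f x|)) (hg : Summable (fun x => |g x|)) :
    ∑' x, dconv f g x = (∑' x, f x) * (∑' x, g x) := by
  rw [tsum_mul_tsum_eq_tsum_sum_range_of_summable_norm
    (by simpa [Real.norm_eq_abs] using hf) (by simpa [Real.norm_eq_abs] using hg)]
  rfl

lemma dconv_sum_left {ι : Type*} (s : Finset ι) (f : ι → ℕ → ℝ) (g : ℕ → ℝ) (x : ℕ) :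
    dconv (fun y => ∑ i ∈ s, f i y) g x = ∑ i ∈ s, dconv (f i) g x := by
  unfold dconv
  rw [Finset.sum_comm]
  congr 1; funext j; rw [Finset.sum_mul]

lemma dconv_lin_left (c d : ℝ) (f1 f2 g : ℕ → ℝ) (x : ℕ) :
    dconv (fun y => c * f1 y + d * f2 y) g x = c * dconv f1 g x + d * dconv f2 g x := by
  unfold dconv
  simp only [add_mul, mul_assoc, Finset.sum_add_distrib, Finset.mul_sum]

lemma dconv_lin_right (c d : ℝ) (f g1 g2 : ℕ → ℝ) (x : ℕ) :
    dconv f (fun y => c * g1 y + d * g2 y) x = c * dconv f g1 x + d * dconv f g2 x := by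
  unfold dconv
  simp only [Finset.mul_sum, Finset.sum_add_distrib, mul_add]
  congr 1 <;> { congr 1; funext j; ring }

lemma update_castSucc_last {n : ℕ} (P : Fin (n+1) → ℕ → ℝ) (f : ℕ → ℝ) :
    (fun j : Fin n => Function.update P (Fin.last n) f j.castSucc) = fun j => P j.castSucc := by
  funext j
  exact Function.update_of_ne (Fin.castSucc_lt_last j).ne _ _

lemma update_castSucc_castSucc {n : ℕ} (P : Fin (n+1) → ℕ → ℝ) (k : Fin n) (f : ℕ → ℝ) :
    (fun j : Fin n => Function.update P k.castSucc f j.castSucc)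
      = Function.update (fun j : Fin n => P j.castSucc) k f := by
  funext j
  by_cases h : j = k
  · subst h; simp
  · rw [Function.update_of_ne (by simpa using h), Function.update_of_ne h]

lemma sumDist_nonneg : ∀ (n : ℕ) (P : Fin n → ℕ → ℝ), (∀ i x, 0 ≤ P i x) →
    ∀ x, 0 ≤ sumDist n P x := by
  intro n
  induction n with
  | zero => intro P _ x; exact delta0_nonneg x
  | succ n ih =>
    intro P hP x
    exact dconv_nonneg (ih _ fun i y => hP _ y) (fun y => hP _ y) x

lemma sumDist_abs_le : ∀ (n : ℕ) (f g : Fin n → ℕ → ℝ), (∀ i x, |f i x| ≤ g i x) →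
    ∀ x, |sumDist n f x| ≤ sumDist n g x := by
  intro n
  induction n with
  | zero => intro f g _ x; simp only [sumDist]; rw [abs_of_nonneg (delta0_nonneg x)]
  | succ n ih =>
    intro f g h x
    exact abs_dconv_le (ih _ _ fun i y => h _ y) (fun y => h _ y) x

lemma sumDist_summable : ∀ (n : ℕ) (f : Fin n → ℕ → ℝ),
    (∀ i, Summable (fun x => |f i x|)) → Summable (fun x => |sumDist n f x|) := by
  intro n
  induction n with
  | zero => intro f _; exact delta0_summable
  | succ n ih =>
    intro f hf
    exact dconv_summable (ih _ fun i => hf _) (hf _)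

lemma sumDist_tsum : ∀ (n : ℕ) (f : Fin n → ℕ → ℝ),
    (∀ i, Summable (fun x => |f i x|)) →
    ∑' x, sumDist n f x = ∏ i, ∑' x, f i x := by
  intro n
  induction n with
  | zero => intro f _; simpa [sumDist] using delta0_tsum
  | succ n ih =>
    intro f hf
    rw [show sumDist (n+1) f = dconv (sumDist n fun i => f i.castSucc) (f (Fin.last n)) from rfl,
      dconv_tsum (sumDist_summable n _ fun i => hf _) (hf _), ih _ fun i => hf _,
      Fin.prod_univ_castSucc]

lemma sumDist_update_lin : ∀ (n : ℕ) (P : Fin n → ℕ → ℝ) (i : Fin n) (c d : ℝ) (f g : ℕ → ℝ)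
    (x : ℕ), sumDist n (Function.update P i (fun y => c * f y + d * g y)) x
      = c * sumDist n (Function.update P i f) x + d * sumDist n (Function.update P i g) x := by
  intro n
  induction n with
  | zero => intro P i; exact absurd i.2 (by simp)
  | succ n ih =>
    intro P i c d f g x
    induction i using Fin.lastCases with
    | last =>
      show dconv _ _ x = c * dconv _ _ x + d * dconv _ _ x
      rw [update_castSucc_last, update_castSucc_last, update_castSucc_last,
        Function.update_self, Function.update_self, Function.update_self]
      exact dconv_lin_right c d _ f g x
    | cast k =>
      show dconv _ _ x = c * dconv _ _ x + d * dconv _ _ x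
      rw [update_castSucc_castSucc, update_castSucc_castSucc, update_castSucc_castSucc,
        Function.update_of_ne (Fin.castSucc_lt_last k).ne',
        Function.update_of_ne (Fin.castSucc_lt_last k).ne',
        Function.update_of_ne (Fin.castSucc_lt_last k).ne']
      rw [show sumDist n (Function.update (fun j : Fin n => P j.castSucc) k
            (fun y => c * f y + d * g y))
          = (fun y : ℕ => c * sumDist n (Function.update (fun j : Fin n => P j.castSucc) k f) y
            + d * sumDist n (Function.update (fun j : Fin n => P j.castSucc) k g) y) from
          funext fun y => ih _ k c d f g y]
      exact dconv_lin_left c d _ _ _ x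

lemma summable_abs_of_nonneg {f : ℕ → ℝ} (hf : ∀ x, 0 ≤ f x) (h : Summable f) :
    Summable (fun x => |f x|) := by
  simpa [fun x => abs_of_nonneg (hf x)] using h

lemma key {F G a b : ℕ → ℝ} {Ca Cb : ℝ}
    (hF : ∀ x, 0 ≤ F x) (hG : ∀ x, 0 ≤ G x)
    (hFs : Summable F) (hGs : Summable G)
    (hF1 : ∑' x, F x = 1) (hG1 : ∑' x, G x = 1)
    (ha : ∀ x, |a x| ≤ Ca * F x) (hb : ∀ x, |b x| ≤ Cb * G x)
    (ha0 : ∑' x, a x = 0) :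
    Summable (fun s => (dconv a G s + dconv F b s) ^ 2 / dconv F G s) ∧
    ∑' s, (dconv a G s + dconv F b s) ^ 2 / dconv F G s
      ≤ (∑' x, (a x) ^ 2 / F x) + (∑' y, (b y) ^ 2 / G y) := by
  have haF : ∀ x, F x = 0 → a x = 0 := by
    intro x hx
    have := ha x; rw [hx, mul_zero] at this
    exact abs_eq_zero.mp (le_antisymm this (abs_nonneg _))
  have hbG : ∀ y, G y = 0 → b y = 0 := by
    intro y hy
    have := hb y; rw [hy, mul_zero] at this
    exact abs_eq_zero.mp (le_antisymm this (abs_nonneg _))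
  set A2 : ℕ → ℝ := fun x => (a x) ^ 2 / F x with hA2def
  set B2 : ℕ → ℝ := fun y => (b y) ^ 2 / G y with hB2def
  have hA2nn : ∀ x, 0 ≤ A2 x := fun x => div_nonneg (sq_nonneg _) (hF x)
  have hB2nn : ∀ y, 0 ≤ B2 y := fun y => div_nonneg (sq_nonneg _) (hG y)
  have hA2le : ∀ x, A2 x ≤ Ca ^ 2 * F x := by
    intro x
    rcases eq_or_lt_of_le (hF x) with h | h
    · simp [hA2def, haF x h.symm, ← h]
    · rw [div_le_iff₀ h]
      calc (a x) ^ 2 = |a x| ^ 2 := (sq_abs _).symm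
        _ ≤ (Ca * F x) ^ 2 := by
            apply pow_le_pow_left₀ (abs_nonneg _) (ha x)
        _ = Ca ^ 2 * F x * F x := by ring
  have hB2le : ∀ y, B2 y ≤ Cb ^ 2 * G y := by
    intro y
    rcases eq_or_lt_of_le (hG y) with h | h
    · simp [hB2def, hbG y h.symm, ← h]
    · rw [div_le_iff₀ h]
      calc (b y) ^ 2 = |b y| ^ 2 := (sq_abs _).symm
        _ ≤ (Cb * G y) ^ 2 := by
            apply pow_le_pow_left₀ (abs_nonneg _) (hb y)
        _ = Cb ^ 2 * G y * G y := by ring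
  have hasum : Summable (fun x => |a x|) :=
    Summable.of_nonneg_of_le (fun x => abs_nonneg _) ha (hFs.mul_left Ca)
  have hbsum : Summable (fun y => |b y|) :=
    Summable.of_nonneg_of_le (fun y => abs_nonneg _) hb (hGs.mul_left Cb)
  have hA2sum : Summable A2 :=
    Summable.of_nonneg_of_le hA2nn hA2le (hFs.mul_left _)
  have hB2sum : Summable B2 :=
    Summable.of_nonneg_of_le hB2nn hB2le (hGs.mul_left _)
  have hFabs : Summable (fun x => |F x|) := summable_abs_of_nonneg hF hFs
  have hGabs : Summable (fun y => |G y|) := summable_abs_of_nonneg hG hGs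
  set hfun : ℕ → ℝ := fun s => ∑ j ∈ Finset.range (s + 1),
    (F j * G (s - j)) * (a j / F j + b (s - j) / G (s - j)) ^ 2 with hfundef
  have hfun_nn : ∀ s, 0 ≤ hfun s := by
    intro s
    exact Finset.sum_nonneg fun j _ =>
      mul_nonneg (mul_nonneg (hF j) (hG _)) (sq_nonneg _)
  -- Cauchy-Schwarz step
  have hCS : ∀ s, (dconv a G s + dconv F b s) ^ 2 ≤ dconv F G s * hfun s := by
    intro s
    have hnum : dconv a G s + dconv F b s
        = ∑ j ∈ Finset.range (s + 1), (a j * G (s - j) + F j * b (s - j)) := by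
      show (∑ j ∈ Finset.range (s + 1), a j * G (s - j))
          + (∑ j ∈ Finset.range (s + 1), F j * b (s - j)) = _
      rw [← Finset.sum_add_distrib]
    rw [hnum]
    apply Finset.sum_sq_le_sum_mul_sum_of_sq_eq_mul
    · intro j _; exact mul_nonneg (hF j) (hG _)
    · intro j _; exact mul_nonneg (mul_nonneg (hF j) (hG _)) (sq_nonneg _)
    · intro j _
      have hu : a j * G (s - j) + F j * b (s - j)
          = (F j * G (s - j)) * (a j / F j + b (s - j) / G (s - j)) := by
        by_cases hFj : F j = 0
        · simp [hFj, haF j hFj]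
        · by_cases hGj : G (s - j) = 0
          · simp [hGj, hbG _ hGj]
          · field_simp
      rw [hu]; ring
  -- pointwise split of hfun
  have hsplit : ∀ s, hfun s = dconv A2 G s + dconv F B2 s + 2 * dconv a b s := by
    intro s
    show _ = _
    unfold dconv
    rw [Finset.mul_sum, ← Finset.sum_add_distrib, ← Finset.sum_add_distrib]
    apply Finset.sum_congr rfl
    intro j _
    by_cases hFj : F j = 0
    · simp [hA2def, hFj, haF j hFj]
    · by_cases hGj : G (s - j) = 0
      · simp [hB2def, hGj, hbG _ hGj]
      · show F j * G (s - j) * (a j / F j + b (s - j) / G (s - j)) ^ 2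
          = (a j) ^ 2 / F j * G (s - j) + F j * ((b (s - j)) ^ 2 / G (s - j))
            + 2 * (a j * b (s - j))
        field_simp
        ring
  -- summability and value of hfun
  have hs1 : Summable (dconv A2 G) :=
    (dconv_summable (summable_abs_of_nonneg hA2nn hA2sum) hGabs).of_abs
  have hs2 : Summable (dconv F B2) :=
    (dconv_summable hFabs (summable_abs_of_nonneg hB2nn hB2sum)).of_abs
  have hs3 : Summable (dconv a b) :=
    (dconv_summable hasum hbsum).of_abs
  have hhsum : Summable hfun := by
    rw [show hfun = fun s => dconv A2 G s + dconv F B2 s + 2 * dconv a b s from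
      funext hsplit]
    exact (hs1.add hs2).add (hs3.mul_left 2)
  have hhval : ∑' s, hfun s = (∑' x, A2 x) + (∑' y, B2 y) := by
    rw [show hfun = fun s => dconv A2 G s + dconv F B2 s + 2 * dconv a b s from
      funext hsplit]
    rw [Summable.tsum_add (hs1.add hs2) (hs3.mul_left 2), Summable.tsum_add hs1 hs2, tsum_mul_left,
      dconv_tsum (summable_abs_of_nonneg hA2nn hA2sum) hGabs,
      dconv_tsum hFabs (summable_abs_of_nonneg hB2nn hB2sum),
      dconv_tsum hasum hbsum, ha0, hG1, hF1]
    ring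
  -- final comparison
  have hle : ∀ s, (dconv a G s + dconv F b s) ^ 2 / dconv F G s ≤ hfun s := by
    intro s
    rcases eq_or_lt_of_le (dconv_nonneg hF hG s) with h | h
    · rw [← h, div_zero]; exact hfun_nn s
    · rw [div_le_iff₀ h]
      calc (dconv a G s + dconv F b s) ^ 2 ≤ dconv F G s * hfun s := hCS s
        _ = hfun s * dconv F G s := mul_comm _ _
  have hnn : ∀ s, 0 ≤ (dconv a G s + dconv F b s) ^ 2 / dconv F G s :=
    fun s => div_nonneg (sq_nonneg _) (dconv_nonneg hF hG s)
  have hsum : Summable (fun s => (dconv a G s + dconv F b s) ^ 2 / dconv F G s) :=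
    Summable.of_nonneg_of_le hnn hle hhsum
  refine ⟨hsum, ?_⟩
  calc ∑' s, (dconv a G s + dconv F b s) ^ 2 / dconv F G s ≤ ∑' s, hfun s :=
        Summable.tsum_le_tsum hle hsum hhsum
    _ = _ := hhval

lemma sumDist_update_abs_le (n : ℕ) (P : Fin n → ℕ → ℝ) (hP : ∀ i x, 0 ≤ P i x)
    (i : Fin n) (g : ℕ → ℝ) (C : ℝ) (hg : ∀ x, |g x| ≤ C * P i x) (s : ℕ) :
    |sumDist n (Function.update P i g) s| ≤ C * sumDist n P s := by
  have h1 : ∀ x, |sumDist n (Function.update P i g) x|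
      ≤ sumDist n (Function.update P i (fun y => C * P i y)) x := by
    apply sumDist_abs_le
    intro j x
    by_cases hj : j = i
    · subst hj; simpa using hg x
    · rw [Function.update_of_ne hj, Function.update_of_ne hj]
      exact le_of_eq (abs_of_nonneg (hP j x))
  have h2 : sumDist n (Function.update P i (fun y => C * P i y)) s = C * sumDist n P s := by
    rw [show (fun y => C * P i y) = (fun y => C * P i y + 0 * P i y) from
        funext fun y => by ring,
      sumDist_update_lin, Function.update_eq_self]
    ring
  exact (h1 s).trans h2.le

lemma sumDist_update_summable (n : ℕ) (P : Fin n → ℕ → ℝ) (hP : ∀ i x, 0 ≤ P i x)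
    (hPs : ∀ i, Summable (P i)) (i : Fin n) (g : ℕ → ℝ) (hg : Summable (fun x => |g x|)) :
    Summable (fun x => |sumDist n (Function.update P i g) x|) := by
  apply sumDist_summable
  intro j
  by_cases hj : j = i
  · subst hj; simpa using hg
  · rw [Function.update_of_ne hj]
    exact summable_abs_of_nonneg (hP j) (hPs j)

lemma sumDist_update_tsum_zero (n : ℕ) (P : Fin n → ℕ → ℝ) (hP : ∀ i x, 0 ≤ P i x)
    (hPs : ∀ i, Summable (P i)) (i : Fin n) (g : ℕ → ℝ) (hg : Summable (fun x => |g x|))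
    (hg0 : ∑' x, g x = 0) :
    ∑' x, sumDist n (Function.update P i g) x = 0 := by
  rw [sumDist_tsum n _ (by
    intro j
    by_cases hj : j = i
    · subst hj; simpa using hg
    · rw [Function.update_of_ne hj]
      exact summable_abs_of_nonneg (hP j) (hPs j))]
  have : (fun j => ∑' x, Function.update P i g j x)
      = Function.update (fun j => ∑' x, P j x) i (∑' x, g x) := by
    funext j
    by_cases hj : j = i
    · subst hj; simp
    · rw [Function.update_of_ne hj, Function.update_of_ne hj]
  rw [this, Finset.prod_update_of_mem (Finset.mem_univ i), hg0, zero_mul]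

lemma main_ind : ∀ (n : ℕ) (P b : Fin n → ℕ → ℝ) (C : Fin n → ℝ),
    (∀ i x, 0 ≤ P i x) → (∀ i, Summable (P i)) → (∀ i, ∑' x, P i x = 1) →
    (∀ i x, |b i x| ≤ C i * P i x) → (∀ i, ∑' x, b i x = 0) →
    Summable (fun s => (∑ i, sumDist n (Function.update P i (b i)) s) ^ 2 / sumDist n P s) ∧
    ∑' s, (∑ i, sumDist n (Function.update P i (b i)) s) ^ 2 / sumDist n P s
      ≤ ∑ i, ∑' x, (b i x) ^ 2 / P i x := by
  intro n
  induction n with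
  | zero =>
    intro P b C _ _ _ _ _
    constructor
    · simpa using summable_zero
    · simp
  | succ n ih =>
    intro P b C hP hPs hP1 hb hb0
    have hP' : ∀ (j : Fin n) x, 0 ≤ P j.castSucc x := fun j x => hP _ x
    have hPs' : ∀ (j : Fin n), Summable (P j.castSucc) := fun j => hPs _
    have hP1' : ∀ (j : Fin n), ∑' x, P j.castSucc x = 1 := fun j => hP1 _
    have hb' : ∀ (j : Fin n) x, |b j.castSucc x| ≤ C j.castSucc * P j.castSucc x :=
      fun j x => hb _ x
    have hb0' : ∀ (j : Fin n), ∑' x, b j.castSucc x = 0 := fun j => hb0 _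
    -- F and its properties
    have hFnn : ∀ x, 0 ≤ sumDist n (fun j => P j.castSucc) x :=
      sumDist_nonneg n _ hP'
    have hFabs : Summable (fun x => |sumDist n (fun j => P j.castSucc) x|) :=
      sumDist_summable n _ fun j => summable_abs_of_nonneg (hP' j) (hPs' j)
    have hFs : Summable (sumDist n (fun j => P j.castSucc)) := hFabs.of_abs
    have hF1 : ∑' x, sumDist n (fun j => P j.castSucc) x = 1 := by
      rw [sumDist_tsum n _ fun j => summable_abs_of_nonneg (hP' j) (hPs' j)]
      exact Finset.prod_eq_one fun j _ => hP1' j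
    -- the numerator rewrite
    have key2 : ∀ s, (∑ i : Fin (n+1), sumDist (n+1) (Function.update P i (b i)) s)
        = dconv (fun t => ∑ j : Fin n,
            sumDist n (Function.update (fun j' : Fin n => P j'.castSucc) j (b j.castSucc)) t)
            (P (Fin.last n)) s
          + dconv (sumDist n (fun j => P j.castSucc)) (b (Fin.last n)) s := by
      intro s
      rw [Fin.sum_univ_castSucc]
      congr 1
      · rw [dconv_sum_left]
        apply Finset.sum_congr rfl
        intro k _
        show dconv (sumDist n fun j => Function.update P k.castSucc (b k.castSucc) j.castSucc)
            (Function.update P k.castSucc (b k.castSucc) (Fin.last n)) s = _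
        rw [update_castSucc_castSucc, Function.update_of_ne (Fin.castSucc_lt_last k).ne']
      · show dconv (sumDist n fun j => Function.update P (Fin.last n) (b (Fin.last n)) j.castSucc)
            (Function.update P (Fin.last n) (b (Fin.last n)) (Fin.last n)) s = _
        rw [update_castSucc_last, Function.update_self]
    -- N' properties
    have hN'le : ∀ s, |∑ j : Fin n,
        sumDist n (Function.update (fun j' : Fin n => P j'.castSucc) j (b j.castSucc)) s|
        ≤ (∑ j : Fin n, C j.castSucc) * sumDist n (fun j => P j.castSucc) s := by
      intro s
      calc |∑ j : Fin n, _| ≤ ∑ j : Fin n, |sumDist n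
            (Function.update (fun j' : Fin n => P j'.castSucc) j (b j.castSucc)) s| :=
          Finset.abs_sum_le_sum_abs _ _
        _ ≤ ∑ j : Fin n, C j.castSucc * sumDist n (fun j => P j.castSucc) s := by
            apply Finset.sum_le_sum
            intro j _
            exact sumDist_update_abs_le n _ hP' j _ _ (hb' j) s
        _ = _ := by rw [Finset.sum_mul]
    have hterm_abs : ∀ j : Fin n, Summable (fun s => |sumDist n
        (Function.update (fun j' : Fin n => P j'.castSucc) j (b j.castSucc)) s|) := by
      intro j
      apply sumDist_update_summable n _ hP' hPs'
      exact Summable.of_nonneg_of_le (fun x => abs_nonneg _) (hb' j) ((hPs' j).mul_left _)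
    have hN'0 : ∑' s, (∑ j : Fin n,
        sumDist n (Function.update (fun j' : Fin n => P j'.castSucc) j (b j.castSucc)) s) = 0 := by
      rw [Summable.tsum_finsetSum fun j _ => (hterm_abs j).of_abs]
      apply Finset.sum_eq_zero
      intro j _
      apply sumDist_update_tsum_zero n _ hP' hPs'
      · exact Summable.of_nonneg_of_le (fun x => abs_nonneg _) (hb' j) ((hPs' j).mul_left _)
      · exact hb0' j
    -- apply key
    have hkey := key (F := sumDist n (fun j => P j.castSucc)) (G := P (Fin.last n))
      (a := fun t => ∑ j : Fin n,
        sumDist n (Function.update (fun j' : Fin n => P j'.castSucc) j (b j.castSucc)) t)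
      (b := b (Fin.last n))
      (Ca := ∑ j : Fin n, C j.castSucc) (Cb := C (Fin.last n))
      hFnn (fun x => hP _ x) hFs (hPs _) hF1 (hP1 _)
      hN'le (fun x => hb _ x) hN'0
    -- apply ih
    have hIH := ih (fun j => P j.castSucc) (fun j => b j.castSucc) (fun j => C j.castSucc)
      hP' hPs' hP1' hb' hb0'
    have hgoal_eq : (fun s => (∑ i : Fin (n+1),
          sumDist (n+1) (Function.update P i (b i)) s) ^ 2 / sumDist (n+1) P s)
        = (fun s => (dconv (fun t => ∑ j : Fin n,
            sumDist n (Function.update (fun j' : Fin n => P j'.castSucc) j (b j.castSucc)) t)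
            (P (Fin.last n)) s
          + dconv (sumDist n (fun j => P j.castSucc)) (b (Fin.last n)) s) ^ 2
          / dconv (sumDist n (fun j => P j.castSucc)) (P (Fin.last n)) s) := by
      funext s
      rw [key2 s]
      rfl
    constructor
    · rw [hgoal_eq]; exact hkey.1
    · rw [hgoal_eq]
      calc ∑' s, _ ≤ _ := hkey.2
        _ ≤ (∑ j : Fin n, ∑' x, (b j.castSucc x) ^ 2 / P j.castSucc x)
            + ∑' y, (b (Fin.last n) y) ^ 2 / P (Fin.last n) y := by
            exact add_le_add hIH.2 le_rfl
        _ = ∑ i : Fin (n+1), ∑' x, (b i x) ^ 2 / P i x := by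
            rw [Fin.sum_univ_castSucc]

lemma pmean_bern {p : ℝ} : pmean (bern p) = p := by
  unfold pmean
  rw [tsum_eq_single 1]
  · simp [bern]
  · intro x hx
    match x, hx with
    | 0, _ => simp
    | (k+2), _ => simp [bern]

lemma sizeBias_bern {p : ℝ} (hp : p ≠ 0) : sizeBias (bern p) = delta0 := by
  funext y
  unfold sizeBias
  rw [pmean_bern]
  match y with
  | 0 => simp [bern, delta0, div_self hp]
  | (k+1) => simp [bern, delta0]

lemma dcompound_delta0 (Q : ℕ → ℝ) : dcompound Q delta0 = delta0 := by
  funext x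
  unfold dcompound
  rw [tsum_eq_single 0]
  · show delta0 0 * delta0 x = delta0 x
    simp [delta0]
  · intro k hk
    have : delta0 k = 0 := by simp [delta0, hk]
    rw [this, zero_mul]

lemma isDist_summable {Q : ℕ → ℝ} (h : (∑' x, Q x) = 1) : Summable Q := by
  by_contra hs
  rw [tsum_eq_zero_of_not_summable hs] at h
  norm_num at h

section cbernFacts

variable {p : ℝ} {Q : ℕ → ℝ} (hp0 : 0 < p) (hp1 : p < 1)
  (hQnn : ∀ x, 0 ≤ Q x) (hQ1 : (∑' x, Q x) = 1) (hQ0 : Q 0 = 0)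

include hp1 in
lemma cbern_nonneg (hQnn : ∀ x, 0 ≤ Q x) (hp0' : 0 ≤ p) : ∀ x, 0 ≤ cbern p Q x := by
  intro x
  unfold cbern
  split
  · linarith
  · exact mul_nonneg hp0' (hQnn x)

include hQ1 in
lemma cbern_summable : Summable (cbern p Q) := by
  have h1 : Summable (fun x => cbern p Q (x + 1)) := by
    have : (fun x => cbern p Q (x + 1)) = fun x => p * Q (x + 1) := by
      funext x; simp [cbern]
    rw [this]
    exact (((summable_nat_add_iff 1).mpr (isDist_summable hQ1))).mul_left p
  exact (summable_nat_add_iff 1).mp h1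

include hQ1 hQ0 in
lemma tsum_Q_succ : ∑' x, Q (x + 1) = 1 := by
  have h := Summable.tsum_eq_zero_add (isDist_summable hQ1)
  rw [hQ0, zero_add] at h
  rw [← h, hQ1]

include hQ1 hQ0 in
lemma cbern_tsum : ∑' x, cbern p Q x = 1 := by
  rw [Summable.tsum_eq_zero_add (cbern_summable hQ1)]
  have h2 : (fun x => cbern p Q (x + 1)) = fun x => p * Q (x + 1) := by
    funext x; simp [cbern]
  rw [h2, tsum_mul_left, tsum_Q_succ hQ1 hQ0]
  show (1 - p) + p * 1 = 1
  ring

include hp0 hp1 hQnn in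
lemma cbern_score_bound :
    ∀ x, |p * (delta0 x - cbern p Q x)| ≤ (p / (1 - p)) * cbern p Q x := by
  intro x
  have h1p : 0 < 1 - p := by linarith
  match x with
  | 0 =>
    show |p * (1 - (1 - p))| ≤ (p / (1 - p)) * (1 - p)
    rw [div_mul_cancel₀ _ h1p.ne']
    have : p * (1 - (1 - p)) = p * p := by ring
    rw [this, abs_of_nonneg (by positivity)]
    nlinarith
  | (k+1) =>
    show |p * (0 - p * Q (k + 1))| ≤ (p / (1 - p)) * (p * Q (k + 1))
    have h : p * (0 - p * Q (k + 1)) = -(p * (p * Q (k + 1))) := by ring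
    have hnn : 0 ≤ p * (p * Q (k + 1)) :=
      mul_nonneg hp0.le (mul_nonneg hp0.le (hQnn _))
    rw [h, abs_neg, abs_of_nonneg hnn]
    rw [div_mul_eq_mul_div, le_div_iff₀ h1p]
    nlinarith [mul_nonneg hnn hp0.le]

include hQ1 hQ0 in
lemma cbern_score_tsum_zero :
    ∑' x, p * (delta0 x - cbern p Q x) = 0 := by
  rw [tsum_mul_left, Summable.tsum_sub delta0_summable.of_abs (cbern_summable hQ1),
    delta0_tsum, cbern_tsum hQ1 hQ0]
  simp

include hp0 hp1 hQ1 hQ0 in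
lemma cbern_score_info :
    ∑' x, (p * (delta0 x - cbern p Q x)) ^ 2 / cbern p Q x = p ^ 3 / (1 - p) := by
  have h1p : 0 < 1 - p := by linarith
  have hfs : ∀ x : ℕ, (p * (delta0 (x + 1) - cbern p Q (x + 1))) ^ 2 / cbern p Q (x + 1)
      = p ^ 3 * Q (x + 1) := by
    intro x
    show (p * (0 - p * Q (x + 1))) ^ 2 / (p * Q (x + 1)) = p ^ 3 * Q (x + 1)
    by_cases hq : Q (x + 1) = 0
    · simp [hq]
    · field_simp
      ring
  have hsum : Summable (fun x => (p * (delta0 x - cbern p Q x)) ^ 2 / cbern p Q x) := by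
    apply (summable_nat_add_iff 1).mp
    rw [show (fun x => (p * (delta0 (x + 1) - cbern p Q (x + 1))) ^ 2 / cbern p Q (x + 1))
        = fun x => p ^ 3 * Q (x + 1) from funext hfs]
    exact ((summable_nat_add_iff 1).mpr (isDist_summable hQ1)).mul_left _
  rw [Summable.tsum_eq_zero_add hsum]
  have h0 : (p * (delta0 0 - cbern p Q 0)) ^ 2 / cbern p Q 0 = p ^ 4 / (1 - p) := by
    show (p * (1 - (1 - p))) ^ 2 / (1 - p) = p ^ 4 / (1 - p)
    congr 1
    ring
  rw [h0, show (fun x => (p * (delta0 (x + 1) - cbern p Q (x + 1))) ^ 2 / cbern p Q (x + 1))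
      = fun x => p ^ 3 * Q (x + 1) from funext hfs, tsum_mul_left, tsum_Q_succ hQ1 hQ0]
  field_simp
  ring

include hp1 in
lemma delta0_le_cbern (hQnn : ∀ x, 0 ≤ Q x) (hp0' : 0 ≤ p) :
    ∀ x, |delta0 x| ≤ (1 - p)⁻¹ * cbern p Q x := by
  intro x
  have h1p : 0 < 1 - p := by linarith
  match x with
  | 0 =>
    show |(1 : ℝ)| ≤ (1 - p)⁻¹ * (1 - p)
    rw [abs_one, inv_mul_cancel₀ h1p.ne']
  | (k+1) =>
    show |(0 : ℝ)| ≤ (1 - p)⁻¹ * (p * Q (k + 1))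
    rw [abs_zero]
    exact mul_nonneg (inv_nonneg.mpr h1p.le) (mul_nonneg hp0' (hQnn _))

end cbernFacts


lemma sum_p_pos {n : ℕ} (hn : 0 < n) (p : Fin n → ℝ) (hp : ∀ i, 0 < p i ∧ p i < 1) :
    0 < ∑ i : Fin n, p i :=
  Finset.sum_pos (fun i _ => (hp i).1) ⟨⟨0, hn⟩, Finset.mem_univ _⟩

/-- **Corollary 4.2.** For a sum of independent compound Bernoulli random variables
`Y_i = B_i X_i`, the size-biased information satisfies
`J_{𝐐,1}(S_n) ≤ (1/λ) ∑ i p_i³/(1−p_i)`. -/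
theorem J1_sum_cbern_le
    (n : ℕ) (p : Fin n → ℝ) (hp : ∀ i, 0 < p i ∧ p i < 1)
    (Qs : Fin n → ℕ → ℝ) (hQs : ∀ i, IsDistN (Qs i))
    (lam : ℝ) (hlam : lam = ∑ i : Fin n, p i)
    (P : ℕ → ℝ) (hP : P = sumDist n fun i => cbern (p i) (Qs i))
    (Pmod : Fin n → ℕ → ℝ)
    (hPmod : Pmod = fun i =>
      dconv (looDist n (fun j => cbern (p j) (Qs j)) i)
        (dcompound (Qs i) (sizeBias (bern (p i))))) :
    J1 n p P Pmod ≤ (1 / lam) * ∑ i : Fin n, (p i) ^ 3 / (1 - p i) := by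
  subst hP hPmod hlam
  rcases Nat.eq_zero_or_pos n with hn | hn
  · subst hn
    simp [J1]
  have hQnn : ∀ i x, 0 ≤ Qs i x := fun i => (hQs i).1.1
  have hQ1 : ∀ i, ∑' x, Qs i x = 1 := fun i => (hQs i).1.2
  have hQ0 : ∀ i, Qs i 0 = 0 := fun i => (hQs i).2
  have hlam0 : 0 < ∑ i : Fin n, p i := sum_p_pos hn p hp
  have hPinn : ∀ (i : Fin n) x, 0 ≤ cbern (p i) (Qs i) x :=
    fun i => cbern_nonneg (hp i).2 (hQnn i) (hp i).1.le
  have hPisum : ∀ i : Fin n, Summable (cbern (p i) (Qs i)) :=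
    fun i => cbern_summable (hQ1 i)
  have hPi1 : ∀ i : Fin n, ∑' x, cbern (p i) (Qs i) x = 1 :=
    fun i => cbern_tsum (hQ1 i) (hQ0 i)
  -- reduce Pmod
  have hPmodEq : (fun i => dconv (looDist n (fun j => cbern (p j) (Qs j)) i)
      (dcompound (Qs i) (sizeBias (bern (p i)))))
      = fun i => sumDist n (Function.update (fun j => cbern (p j) (Qs j)) i delta0) := by
    funext i
    rw [sizeBias_bern (hp i).1.ne', dcompound_delta0, dconv_delta0]
    rfl
  rw [hPmodEq]
  -- the main functional inequality
  have hmain := main_ind n (fun j => cbern (p j) (Qs j))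
    (fun i => fun x => p i * (delta0 x - cbern (p i) (Qs i) x))
    (fun i => p i / (1 - p i))
    hPinn hPisum hPi1
    (fun i => cbern_score_bound (hp i).1 (hp i).2 (hQnn i))
    (fun i => cbern_score_tsum_zero (hQ1 i) (hQ0 i))
  beta_reduce at hmain
  -- decompose the updated sums
  have hupd : ∀ (i : Fin n) s,
      sumDist n (Function.update (fun j => cbern (p j) (Qs j)) i
        (fun x => p i * (delta0 x - cbern (p i) (Qs i) x))) s
      = p i * sumDist n (Function.update (fun j => cbern (p j) (Qs j)) i delta0) s
        - p i * sumDist n (fun j => cbern (p j) (Qs j)) s := by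
    intro i s
    have hueq : Function.update (fun j => cbern (p j) (Qs j)) i (cbern (p i) (Qs i))
        = (fun j => cbern (p j) (Qs j)) := Function.update_eq_self i _
    rw [show (fun x => p i * (delta0 x - cbern (p i) (Qs i) x))
        = (fun x => p i * delta0 x + (-(p i)) * cbern (p i) (Qs i) x) from
        funext fun x => by ring,
      sumDist_update_lin]
    rw [show Function.update (fun j => cbern (p j) (Qs j)) i (fun x => cbern (p i) (Qs i) x)
        = (fun j => cbern (p j) (Qs j)) from hueq]
    ring
  -- rewrite the J1 summand
  have hscore : ∀ s, sumDist n (fun j => cbern (p j) (Qs j)) s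
      * (score1 n p (sumDist n fun i => cbern (p i) (Qs i))
          (fun i => sumDist n (Function.update (fun j => cbern (p j) (Qs j)) i delta0)) s) ^ 2
      = (1 / (∑ i : Fin n, p i) ^ 2) *
        ((∑ i : Fin n, sumDist n (Function.update (fun j => cbern (p j) (Qs j)) i
            (fun x => p i * (delta0 x - cbern (p i) (Qs i) x))) s) ^ 2
          / sumDist n (fun j => cbern (p j) (Qs j)) s) := by
    intro s
    have hN : (∑ i : Fin n, sumDist n (Function.update (fun j => cbern (p j) (Qs j)) i
          (fun x => p i * (delta0 x - cbern (p i) (Qs i) x))) s)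
        = (∑ i : Fin n, p i * sumDist n
            (Function.update (fun j => cbern (p j) (Qs j)) i delta0) s)
          - (∑ i : Fin n, p i) * sumDist n (fun j => cbern (p j) (Qs j)) s := by
      rw [Finset.sum_congr rfl (fun i _ => hupd i s), Finset.sum_sub_distrib, Finset.sum_mul]
    unfold score1
    rcases eq_or_lt_of_le (sumDist_nonneg n _ hPinn s) with hF0 | hF0
    · have hL0 : ∀ i : Fin n,
          sumDist n (Function.update (fun j => cbern (p j) (Qs j)) i delta0) s = 0 := by
        intro i
        have h := sumDist_update_abs_le n _ hPinn i delta0 (1 - p i)⁻¹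
          (delta0_le_cbern (hp i).2 (hQnn i) (hp i).1.le) s
        rw [← hF0, mul_zero] at h
        exact abs_eq_zero.mp (le_antisymm h (abs_nonneg _))
      rw [hN]
      rw [show sumDist n (fun i => cbern (p i) (Qs i)) s = 0 from hF0.symm]
      simp [hL0]
    · have hFne : sumDist n (fun j => cbern (p j) (Qs j)) s ≠ 0 := hF0.ne'
      have hFne' : sumDist n (fun i => cbern (p i) (Qs i)) s ≠ 0 := hFne
      rw [hN]
      field_simp
  -- put it together
  unfold J1
  rw [show (fun s => sumDist n (fun i => cbern (p i) (Qs i)) s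
      * (score1 n p (sumDist n fun i => cbern (p i) (Qs i))
          (fun i => sumDist n (Function.update (fun j => cbern (p j) (Qs j)) i delta0)) s) ^ 2)
      = (fun s => (1 / (∑ i : Fin n, p i) ^ 2) *
        ((∑ i : Fin n, sumDist n (Function.update (fun j => cbern (p j) (Qs j)) i
            (fun x => p i * (delta0 x - cbern (p i) (Qs i) x))) s) ^ 2
          / sumDist n (fun j => cbern (p j) (Qs j)) s)) from funext hscore,
    tsum_mul_left]
  have hT := hmain.2
  have hTval : (∑ i : Fin n, ∑' x,
      (p i * (delta0 x - cbern (p i) (Qs i) x)) ^ 2 / cbern (p i) (Qs i) x)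
      = ∑ i : Fin n, (p i) ^ 3 / (1 - p i) :=
    Finset.sum_congr rfl fun i _ =>
      cbern_score_info (hp i).1 (hp i).2 (hQ1 i) (hQ0 i)
  rw [hTval] at hT
  have hstep : (∑ i : Fin n, p i) * (1 / (∑ i : Fin n, p i) ^ 2 * ∑' s,
      ((∑ i : Fin n, sumDist n (Function.update (fun j => cbern (p j) (Qs j)) i
          (fun x => p i * (delta0 x - cbern (p i) (Qs i) x))) s) ^ 2
        / sumDist n (fun j => cbern (p j) (Qs j)) s))
      = (1 / (∑ i : Fin n, p i)) * ∑' s,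
      ((∑ i : Fin n, sumDist n (Function.update (fun j => cbern (p j) (Qs j)) i
          (fun x => p i * (delta0 x - cbern (p i) (Qs i) x))) s) ^ 2
        / sumDist n (fun j => cbern (p j) (Qs j)) s) := by
    field_simp
  rw [hstep]
  exact mul_le_mul_of_nonneg_left hT (by positivity)
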